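/- Let A : ℝ → (m×n real matrices) and B : ℝ → (n×m real matrices) be differentiable functions such that at every time t, B(t) is the Moore–Penrose pseudoinverse of A(t), i.e., A B A = A, B A B = B, (A B)ᵀ = A B, (B A)ᵀ = B A. Define P(t) = I − B(t) A(t) and Λ(t) = −B(t) A'(t). Then the derivative of P satisfies P'(t) = Λ(t) P(t) + P(t) Λ(t)ᵀ for every t. -/

import Mathlib

open Matrix


lemma matmul_hasDerivAt {p q r : ℕ} {M : ℝ → Matrix (Fin p) (Fin q) ℝ}
    {N : ℝ → Matrix (Fin q) (Fin r) ℝ} {M' : Matrix (Fin p) (Fin q) ℝ}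
    {N' : Matrix (Fin q) (Fin r) ℝ} {t : ℝ}
    (hM : ∀ i j, HasDerivAt (fun s => M s i j) (M' i j) t)
    (hN : ∀ i j, HasDerivAt (fun s => N s i j) (N' i j) t) :
    ∀ i j, HasDerivAt (fun s => (M s * N s) i j) ((M' * N t + M t * N') i j) t := by
  intro i j
  simp only [Matrix.mul_apply, Matrix.add_apply, ← Finset.sum_add_distrib]
  exact HasDerivAt.fun_sum fun k _ => (hM i k).mul (hN k j)

lemma key_alg {m n : ℕ} (a a' : Matrix (Fin m) (Fin n) ℝ) (b b' : Matrix (Fin n) (Fin m) ℝ)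
    (h1 : a * b * a = a) (h2 : b * a * b = b) (h4 : (b * a)ᵀ = b * a)
    (hE : (a' * b + a * b') * a + a * b * a' = a')
    (hD : (b' * a + b * a')ᵀ = b' * a + b * a') :
    -(b' * a + b * a') =
      (-(b * a')) * (1 - b * a) + (1 - b * a) * (-(b * a'))ᵀ := by
  have s2 : b * (a * aᵀ) = aᵀ := by
    calc b * (a * aᵀ) = (b * a) * aᵀ := (Matrix.mul_assoc _ _ _).symm
      _ = (b * a)ᵀ * aᵀ := by rw [h4]
      _ = (a * (b * a))ᵀ := (Matrix.transpose_mul _ _).symm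
      _ = aᵀ := by rw [← Matrix.mul_assoc, h1]
  have s3 : b * (a * b) = b := by rw [← Matrix.mul_assoc, h2]
  -- (A): b*(a'*(b*a)) + b*(a*(b'*a)) = 0
  have eqA : b * (a' * (b * a)) + b * (a * (b' * a)) = 0 := by
    have := congrArg (fun X => b * X) hE
    simp only [Matrix.mul_add, Matrix.add_mul, Matrix.mul_assoc] at this
    -- this : b * (a' * (b * a)) + b * (a * (b' * a)) + b * (a * (b * a')) = b * a'
    have hc : b * (a * (b * a')) = b * a' := by
      rw [← Matrix.mul_assoc, ← Matrix.mul_assoc, h2]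
    rw [hc] at this
    linear_combination (norm := abel) this
  -- hD' : aᵀ*b'ᵀ + a'ᵀ*bᵀ = b'*a + b*a'
  have hD' : aᵀ * b'ᵀ + a'ᵀ * bᵀ = b' * a + b * a' := by
    rw [← hD, Matrix.transpose_add, Matrix.transpose_mul, Matrix.transpose_mul]
  -- (B): b*(a*(a'ᵀ*bᵀ)) = a'ᵀ*bᵀ - b'*a + b*(a*(b'*a))
  have eqB : b * (a * (a'ᵀ * bᵀ)) = a'ᵀ * bᵀ - b' * a + b * (a * (b' * a)) := by
    have := congrArg (fun X => (b * a) * X) hD'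
    simp only [Matrix.mul_add, Matrix.mul_assoc] at this
    -- this : b*(a*(aᵀ*(b'ᵀ))) + b*(a*(a'ᵀ*bᵀ)) = b*(a*(b'*a)) + b*(a*(b*a'))
    have t1 : b * (a * (aᵀ * b'ᵀ)) = aᵀ * b'ᵀ := by
      rw [← Matrix.mul_assoc a aᵀ b'ᵀ, ← Matrix.mul_assoc b (a * aᵀ) b'ᵀ, s2]
    have t2 : b * (a * (b * a')) = b * a' := by
      rw [← Matrix.mul_assoc, ← Matrix.mul_assoc, h2]
    rw [t1, t2] at this
    linear_combination (norm := abel) this - hD'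
  -- final
  have expand : (-(b * a')) * (1 - b * a) + (1 - b * a) * (-(b * a'))ᵀ =
      -(b * a') + b * (a' * (b * a)) - a'ᵀ * bᵀ + b * (a * (a'ᵀ * bᵀ)) := by
    simp only [Matrix.transpose_neg, Matrix.transpose_mul, Matrix.mul_sub, Matrix.sub_mul,
      Matrix.mul_one, Matrix.one_mul, Matrix.neg_mul, Matrix.mul_neg, Matrix.mul_assoc]
    abel
  rw [expand, eqB]
  linear_combination (norm := abel) -eqA

/-- Time derivative of the orthogonal projection `P(t) = I - A⁺(t) A(t)` onto the null
space of a time-varying constraint matrix `A(t)`: with `Λ(t) = -A⁺(t) A'(t)`, one has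
`P' = Λ P + P Λᵀ`.  Differentiability is stated entrywise. -/
theorem stmt_8 (m n : ℕ)
    (A A' : ℝ → Matrix (Fin m) (Fin n) ℝ)
    (B B' : ℝ → Matrix (Fin n) (Fin m) ℝ)
    (hA : ∀ t i j, HasDerivAt (fun s => A s i j) (A' t i j) t)
    (hB : ∀ t i j, HasDerivAt (fun s => B s i j) (B' t i j) t)
    (h1 : ∀ t, A t * B t * A t = A t)
    (h2 : ∀ t, B t * A t * B t = B t)
    (h3 : ∀ t, (A t * B t)ᵀ = A t * B t)
    (h4 : ∀ t, (B t * A t)ᵀ = B t * A t) :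
    ∀ t i j, HasDerivAt (fun s => ((1 : Matrix (Fin n) (Fin n) ℝ) - B s * A s) i j)
      (((-(B t * A' t)) * ((1 : Matrix (Fin n) (Fin n) ℝ) - B t * A t) +
        ((1 : Matrix (Fin n) (Fin n) ℝ) - B t * A t) * (-(B t * A' t))ᵀ) i j) t := by
  intro t i j
  -- derivative of B*A entrywise
  have dBA : ∀ i j, HasDerivAt (fun s => (B s * A s) i j)
      ((B' t * A t + B t * A' t) i j) t := matmul_hasDerivAt (hB t) (hA t)
  have dAB : ∀ i j, HasDerivAt (fun s => (A s * B s) i j)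
      ((A' t * B t + A t * B' t) i j) t := matmul_hasDerivAt (hA t) (hB t)
  have dABA : ∀ i j, HasDerivAt (fun s => (A s * B s * A s) i j)
      (((A' t * B t + A t * B' t) * A t + (A t * B t) * A' t) i j) t :=
    matmul_hasDerivAt dAB (hA t)
  -- differentiated identity from A B A = A
  have hE : (A' t * B t + A t * B' t) * A t + A t * B t * A' t = A' t := by
    ext i j
    refine HasDerivAt.unique ?_ (hA t i j)
    have := dABA i j
    simpa only [h1] using this
  -- symmetry of the derivative of B*A
  have hDsym : (B' t * A t + B t * A' t)ᵀ = B' t * A t + B t * A' t := by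
    ext i j
    simp only [Matrix.transpose_apply]
    have hsym : (fun s => (B s * A s) j i) = fun s => (B s * A s) i j := by
      funext s
      have := congrFun (congrFun (h4 s) i) j
      simpa using this
    have h' : HasDerivAt (fun s => (B s * A s) i j)
        ((B' t * A t + B t * A' t) j i) t := hsym ▸ dBA j i
    exact h'.unique (dBA i j)
  -- the key algebraic identity
  have key := key_alg (A t) (A' t) (B t) (B' t) (h1 t) (h2 t) (h4 t) hE hDsym
  -- assemble
  have hconst : HasDerivAt (fun s => (1 : Matrix (Fin n) (Fin n) ℝ) i j
      - (B s * A s) i j) (-((B' t * A t + B t * A' t) i j)) t :=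
    (dBA i j).const_sub _
  have hfun : (fun s => ((1 : Matrix (Fin n) (Fin n) ℝ) - B s * A s) i j)
      = fun s => (1 : Matrix (Fin n) (Fin n) ℝ) i j - (B s * A s) i j := by
    funext s; simp [Matrix.sub_apply]
  rw [hfun]
  have : (((-(B t * A' t)) * ((1 : Matrix (Fin n) (Fin n) ℝ) - B t * A t) +
        ((1 : Matrix (Fin n) (Fin n) ℝ) - B t * A t) * (-(B t * A' t))ᵀ) i j)
      = -((B' t * A t + B t * A' t) i j) := by
    rw [← key]; simp [Matrix.neg_apply]
  rw [this]
  exact hconst
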